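/- Let E, F, G be real Hilbert spaces (each complete), and let f : E → G and g : F → G be continuous linear maps. Then the range inclusion range f ⊆ range g holds if and only if there exists a constant ν > 0 such that for every z ∈ G one has ‖f† z‖_E ≤ ν ‖g† z‖_F, where f† and g† denote the Hilbert-space adjoints of f and g. -/

import Mathlib

open RealInnerProductSpace

/-- Range-inclusion / adjoint-estimate equivalence (Douglas-type lemma) for
continuous linear maps between real Hilbert spaces. -/
theorem range_subset_iff_adjoint_norm_le
    {E F G : Type*}
    [NormedAddCommGroup E] [InnerProductSpace ℝ E] [CompleteSpace E]
    [NormedAddCommGroup F] [InnerProductSpace ℝ F] [CompleteSpace F]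
    [NormedAddCommGroup G] [InnerProductSpace ℝ G] [CompleteSpace G]
    (f : E →L[ℝ] G) (g : F →L[ℝ] G) :
    Set.range f ⊆ Set.range g ↔
      ∃ ν : ℝ, 0 < ν ∧ ∀ z : G,
        ‖ContinuousLinearMap.adjoint f z‖ ≤ ν * ‖ContinuousLinearMap.adjoint g z‖ := by
  constructor
  · -- forward direction: Douglas factorization via the closed graph theorem
    intro hsub
    haveI : CompleteSpace (LinearMap.ker (g : F →ₗ[ℝ] G)) :=
      (ContinuousLinearMap.isClosed_ker g).completeSpace_coe
    set K : Submodule ℝ F := (LinearMap.ker (g : F →ₗ[ℝ] G))ᗮ with hKdef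
    have hKK : Kᗮ = LinearMap.ker (g : F →ₗ[ℝ] G) := Submodule.orthogonal_orthogonal _
    -- existence of preimages
    have hex : ∀ x : E, ∃ y : F, g y = f x := fun x => hsub ⟨x, rfl⟩
    -- candidate map
    let Cfun : E → F := fun x => (K.orthogonalProjection (Classical.choose (hex x)) : F)
    have hCmem : ∀ x, Cfun x ∈ K := fun x => (K.orthogonalProjection _).2
    have hgC : ∀ x, g (Cfun x) = f x := by
      intro x
      have h1 : Classical.choose (hex x) - Cfun x ∈ LinearMap.ker (g : F →ₗ[ℝ] G) := by
        rw [← hKK]; exact Submodule.sub_starProjection_mem_orthogonal (K := K) _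
      have h2 : g (Classical.choose (hex x) - Cfun x) = 0 := h1
      have h3 := Classical.choose_spec (hex x)
      rw [map_sub] at h2
      rw [← h3]; exact (sub_eq_zero.mp h2).symm
    -- uniqueness of the element of K mapped to f x
    have huniq : ∀ (y : F) (x : E), y ∈ K → g y = f x → y = Cfun x := by
      intro y x hyK hgy
      have hker : y - Cfun x ∈ LinearMap.ker (g : F →ₗ[ℝ] G) := by
        simp only [LinearMap.mem_ker, ContinuousLinearMap.coe_coe]
        rw [map_sub, hgy, hgC x, sub_self]
      have hKmem : y - Cfun x ∈ K := sub_mem hyK (hCmem x)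
      have : ⟪y - Cfun x, y - Cfun x⟫ = 0 := by
        exact (Submodule.mem_orthogonal _ _).mp hKmem _ hker
      have := inner_self_eq_zero.mp this
      exact sub_eq_zero.mp this
    -- linearity
    have hadd : ∀ x x', Cfun (x + x') = Cfun x + Cfun x' := by
      intro x x'
      exact (huniq _ (x + x') (add_mem (hCmem x) (hCmem x'))
        (by rw [map_add, hgC, hgC, map_add])).symm
    have hsmul : ∀ (c : ℝ) x, Cfun (c • x) = c • Cfun x := by
      intro c x
      exact (huniq _ (c • x) (Submodule.smul_mem _ c (hCmem x))
        (by rw [map_smul, hgC, map_smul])).symm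
    let C : E →ₗ[ℝ] F := { toFun := Cfun, map_add' := hadd, map_smul' := hsmul }
    -- closed graph theorem
    have hclosed : IsClosed (C.graph : Set (E × F)) := by
      apply IsSeqClosed.isClosed
      intro s p hs hp
      have hs' : ∀ n, (s n).2 = Cfun (s n).1 := fun n => (LinearMap.mem_graph_iff _ _).mp (hs n)
      rw [SetLike.mem_coe, LinearMap.mem_graph_iff]
      have h1 : Filter.Tendsto (fun n => (s n).1) Filter.atTop (nhds p.1) :=
        (continuous_fst.tendsto p).comp hp
      have h2 : Filter.Tendsto (fun n => (s n).2) Filter.atTop (nhds p.2) :=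
        (continuous_snd.tendsto p).comp hp
      have hpK : p.2 ∈ K := by
        have : IsClosed (K : Set F) := Submodule.isClosed_orthogonal _
        exact this.mem_of_tendsto h2 (Filter.Eventually.of_forall (fun n => by
          rw [hs' n]; exact hCmem _))
      have hgp : g p.2 = f p.1 := by
        have hg2 : Filter.Tendsto (fun n => g (s n).2) Filter.atTop (nhds (g p.2)) :=
          (g.continuous.tendsto _).comp h2
        have hf1 : Filter.Tendsto (fun n => f (s n).1) Filter.atTop (nhds (f p.1)) :=
          (f.continuous.tendsto _).comp h1
        have heq : (fun n => g (s n).2) = fun n => f (s n).1 := by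
          funext n; rw [hs' n, hgC]
        rw [heq] at hg2
        exact tendsto_nhds_unique hg2 hf1
      exact huniq _ _ hpK hgp
    have hCcont : Continuous C := C.continuous_of_isClosed_graph hclosed
    let Ccl : E →L[ℝ] F := ⟨C, hCcont⟩
    have hfact : f = g.comp Ccl := by
      ext x; exact (hgC x).symm
    refine ⟨‖ContinuousLinearMap.adjoint Ccl‖ + 1, by positivity, fun z => ?_⟩
    have : ContinuousLinearMap.adjoint f z =
        ContinuousLinearMap.adjoint Ccl (ContinuousLinearMap.adjoint g z) := by
      rw [hfact, ContinuousLinearMap.adjoint_comp]; rfl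
    rw [this]
    calc ‖ContinuousLinearMap.adjoint Ccl (ContinuousLinearMap.adjoint g z)‖
        ≤ ‖ContinuousLinearMap.adjoint Ccl‖ * ‖ContinuousLinearMap.adjoint g z‖ :=
          ContinuousLinearMap.le_opNorm _ _
      _ ≤ (‖ContinuousLinearMap.adjoint Ccl‖ + 1) * ‖ContinuousLinearMap.adjoint g z‖ := by
          apply mul_le_mul_of_nonneg_right _ (norm_nonneg _)
          linarith
  · -- reverse direction: Hahn-Banach + Riesz representation
    rintro ⟨ν, hν, hbound⟩
    rintro _ ⟨x, rfl⟩
    set T := ContinuousLinearMap.adjoint g with hT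
    set u := f x with hu
    -- key well-definedness fact
    have hker : ∀ z z' : G, T z = T z' → ⟪u, z⟫ = ⟪u, z'⟫ := by
      intro z z' h
      have h0 : T (z - z') = 0 := by rw [map_sub, h, sub_self]
      have hf0 : ContinuousLinearMap.adjoint f (z - z') = 0 := by
        have := hbound (z - z')
        rw [h0] at this
        simp only [norm_zero, mul_zero] at this
        exact norm_le_zero_iff.mp this
      have : ⟪u, z - z'⟫ = 0 := by
        rw [hu, ← ContinuousLinearMap.adjoint_inner_right f, hf0, inner_zero_right]
      rw [inner_sub_right] at this
      linarith
    -- functional on the range of T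
    let p : Submodule ℝ F := LinearMap.range (T : G →ₗ[ℝ] F)
    let ℓfun : p → ℝ := fun w => ⟪u, Classical.choose w.2⟫
    have hℓ : ∀ (w : p) (z : G), T z = (w : F) → ℓfun w = ⟪u, z⟫ := by
      intro w z hz
      exact hker _ _ ((Classical.choose_spec w.2).trans hz.symm)
    have hℓadd : ∀ w w' : p, ℓfun (w + w') = ℓfun w + ℓfun w' := by
      intro w w'
      rcases w.2 with ⟨z, hz : T z = w⟩
      rcases w'.2 with ⟨z', hz' : T z' = w'⟩
      rw [hℓ w z hz, hℓ w' z' hz', hℓ (w + w') (z + z') (by rw [map_add, hz, hz']; rfl),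
        ← inner_add_right]
    have hℓsmul : ∀ (c : ℝ) (w : p), ℓfun (c • w) = c • ℓfun w := by
      intro c w
      rcases w.2 with ⟨z, hz : T z = w⟩
      rw [hℓ w z hz, hℓ (c • w) (c • z) (by rw [map_smul, hz]; rfl), real_inner_smul_right]
      rfl
    let ℓ : p →ₗ[ℝ] ℝ := { toFun := ℓfun, map_add' := hℓadd, map_smul' := hℓsmul }
    have hℓbound : ∀ w : p, ‖ℓ w‖ ≤ (ν * ‖x‖) * ‖w‖ := by
      intro w
      rcases w.2 with ⟨z, hz : T z = w⟩
      have h1 : ℓ w = ⟪u, z⟫ := hℓ w z hz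
      have h2 : ⟪u, z⟫ = ⟪x, ContinuousLinearMap.adjoint f z⟫ :=
        (ContinuousLinearMap.adjoint_inner_right f x z).symm
      rw [h1, h2]
      calc ‖⟪x, ContinuousLinearMap.adjoint f z⟫‖
          ≤ ‖x‖ * ‖ContinuousLinearMap.adjoint f z‖ := norm_inner_le_norm _ _
        _ ≤ ‖x‖ * (ν * ‖T z‖) := by
            apply mul_le_mul_of_nonneg_left (hbound z) (norm_nonneg x)
        _ = (ν * ‖x‖) * ‖w‖ := by
            rw [hz, Submodule.norm_coe]; ring
    let ℓc : p →L[ℝ] ℝ := ℓ.mkContinuous (ν * ‖x‖) hℓbound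
    obtain ⟨ψ, hψ, -⟩ := exists_extension_norm_eq p ℓc
    let y : F := (InnerProductSpace.toDual ℝ F).symm ψ
    refine ⟨y, ?_⟩
    apply ext_inner_right ℝ
    intro z
    have h1 : ⟪g y, z⟫ = ⟪y, T z⟫ := by
      rw [hT, ContinuousLinearMap.adjoint_inner_right]
    have h2 : ⟪y, T z⟫ = ψ (T z) := InnerProductSpace.toDual_symm_apply
    have h3 : ψ (T z) = ℓc ⟨T z, ⟨z, rfl⟩⟩ := hψ ⟨T z, ⟨z, rfl⟩⟩
    have h4 : (ℓc ⟨T z, ⟨z, rfl⟩⟩ : ℝ) = ⟪u, z⟫ := hℓ ⟨T z, ⟨z, rfl⟩⟩ z rfl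
    rw [h1, h2, h3, h4]
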